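/- Discrete delta-monotone l'Hôpital rule (right endpoint, increasing case): let a, b ∈ ℤ with a + 1 < b and let f, g : ℤ → ℝ. Suppose that either Δg(n) > 0 for all integers n with a ≤ n ≤ b − 1, or Δg(n) < 0 for all such n. If the function n ↦ Δf(n)/Δg(n) is strictly increasing on the integers n with a ≤ n ≤ b − 1, then the function n ↦ (f(n) − f(b))/(g(n) − g(b)) is strictly increasing on the integers n with a ≤ n ≤ b − 1. (Note that g(n) ≠ g(b) for a ≤ n ≤ b − 1, since g is strictly monotone on {a, …, b}.) -/

import Mathlib

private lemma telescope_sum (f : ℤ → ℝ) (n : ℤ) :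
    ∀ b, n ≤ b → ∑ k ∈ Finset.Ico n b, (f (k + 1) - f k) = f b - f n := by
  refine Int.le_induction ?_ ?_
  · simp
  · intro b hb ih
    have hins : Finset.Ico n (b + 1) = insert b (Finset.Ico n b) := by
      ext x; simp only [Finset.mem_Ico, Finset.mem_insert]; omega
    rw [hins, Finset.sum_insert (by simp), ih]
    ring

private lemma aux_pos (a b : ℤ) (hab : a + 1 < b) (f g : ℤ → ℝ)
    (hg : ∀ n ∈ Set.Icc a (b - 1), 0 < g (n + 1) - g n)
    (hmono : StrictMonoOn (fun n => (f (n + 1) - f n) / (g (n + 1) - g n))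
      (Set.Icc a (b - 1))) :
    StrictMonoOn (fun n => (f n - f b) / (g n - g b))
      (Set.Icc a (b - 1)) := by
  intro m hm n hn hmn
  obtain ⟨ham, hmb⟩ := hm
  obtain ⟨han, hnb⟩ := hn
  have hmem : ∀ k, a ≤ k → k < b → k ∈ Set.Icc a (b - 1) := by
    intro k h1 h2; exact ⟨h1, by omega⟩
  have hn_mem : n ∈ Set.Icc a (b - 1) := ⟨han, hnb⟩
  have hΔ : ∀ k ∈ Set.Icc a (b - 1),
      f (k + 1) - f k = (f (k + 1) - f k) / (g (k + 1) - g k) * (g (k + 1) - g k) := by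
    intro k hk
    exact (div_mul_cancel₀ _ (hg k hk).ne').symm
  have hTn_pos : 0 < ∑ k ∈ Finset.Ico n b, (g (k + 1) - g k) := by
    apply Finset.sum_pos
    · intro k hk
      rw [Finset.mem_Ico] at hk
      exact hg k (hmem k (by omega) hk.2)
    · exact Finset.nonempty_Ico.mpr (by omega)
  have hTm_pos : 0 < ∑ k ∈ Finset.Ico m b, (g (k + 1) - g k) := by
    apply Finset.sum_pos
    · intro k hk
      rw [Finset.mem_Ico] at hk
      exact hg k (hmem k (by omega) hk.2)
    · exact Finset.nonempty_Ico.mpr (by omega)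
  have hU_pos : 0 < ∑ k ∈ Finset.Ico m n, (g (k + 1) - g k) := by
    apply Finset.sum_pos
    · intro k hk
      rw [Finset.mem_Ico] at hk
      exact hg k (hmem k (by omega) (by omega))
    · exact Finset.nonempty_Ico.mpr hmn
  have hrTS : (f (n + 1) - f n) / (g (n + 1) - g n)
        * ∑ k ∈ Finset.Ico n b, (g (k + 1) - g k)
      ≤ ∑ k ∈ Finset.Ico n b, (f (k + 1) - f k) := by
    rw [Finset.mul_sum]
    apply Finset.sum_le_sum
    intro k hk
    rw [Finset.mem_Ico] at hk
    have hk_mem : k ∈ Set.Icc a (b - 1) := hmem k (by omega) hk.2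
    rw [hΔ k hk_mem]
    apply mul_le_mul_of_nonneg_right _ (hg k hk_mem).le
    rcases eq_or_lt_of_le hk.1 with h | h
    · rw [h]
    · exact (hmono hn_mem hk_mem h).le
  have hV_lt : ∑ k ∈ Finset.Ico m n, (f (k + 1) - f k)
      < (f (n + 1) - f n) / (g (n + 1) - g n)
        * ∑ k ∈ Finset.Ico m n, (g (k + 1) - g k) := by
    rw [Finset.mul_sum]
    apply Finset.sum_lt_sum_of_nonempty (Finset.nonempty_Ico.mpr hmn)
    intro k hk
    rw [Finset.mem_Ico] at hk
    have hk_mem : k ∈ Set.Icc a (b - 1) := hmem k (by omega) (by omega)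
    rw [hΔ k hk_mem]
    exact mul_lt_mul_of_pos_right (hmono hk_mem hn_mem hk.2) (hg k hk_mem)
  have hTsplit : (∑ k ∈ Finset.Ico m n, (g (k + 1) - g k))
        + ∑ k ∈ Finset.Ico n b, (g (k + 1) - g k)
      = ∑ k ∈ Finset.Ico m b, (g (k + 1) - g k) := by
    rw [← Finset.sum_union (Finset.Ico_disjoint_Ico_consecutive m n b),
      Finset.Ico_union_Ico_eq_Ico (le_of_lt hmn) (by omega : n ≤ b)]
  have hSsplit : (∑ k ∈ Finset.Ico m n, (f (k + 1) - f k))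
        + ∑ k ∈ Finset.Ico n b, (f (k + 1) - f k)
      = ∑ k ∈ Finset.Ico m b, (f (k + 1) - f k) := by
    rw [← Finset.sum_union (Finset.Ico_disjoint_Ico_consecutive m n b),
      Finset.Ico_union_Ico_eq_Ico (le_of_lt hmn) (by omega : n ≤ b)]
  have hgm : g m - g b = -(∑ k ∈ Finset.Ico m b, (g (k + 1) - g k)) := by
    rw [telescope_sum g m b (by omega)]; ring
  have hgn : g n - g b = -(∑ k ∈ Finset.Ico n b, (g (k + 1) - g k)) := by
    rw [telescope_sum g n b (by omega)]; ring
  have hfm : f m - f b = -(∑ k ∈ Finset.Ico m b, (f (k + 1) - f k)) := by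
    rw [telescope_sum f m b (by omega)]; ring
  have hfn : f n - f b = -(∑ k ∈ Finset.Ico n b, (f (k + 1) - f k)) := by
    rw [telescope_sum f n b (by omega)]; ring
  show (f m - f b) / (g m - g b) < (f n - f b) / (g n - g b)
  rw [hgm, hgn, hfm, hfn, neg_div_neg_eq, neg_div_neg_eq,
    div_lt_div_iff₀ hTm_pos hTn_pos, ← hTsplit, ← hSsplit]
  nlinarith [mul_lt_mul_of_pos_right hV_lt hTn_pos,
    mul_le_mul_of_nonneg_left hrTS hU_pos.le]

/-- Discrete delta-monotone l'Hôpital rule (right endpoint, increasing case),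
with forward difference `Δf n = f (n+1) - f n`. -/
theorem discrete_lhopital_right_increasing
    (a b : ℤ) (hab : a + 1 < b) (f g : ℤ → ℝ)
    (hg : (∀ n ∈ Set.Icc a (b - 1), 0 < g (n + 1) - g n) ∨
          (∀ n ∈ Set.Icc a (b - 1), g (n + 1) - g n < 0))
    (hmono : StrictMonoOn (fun n => (f (n + 1) - f n) / (g (n + 1) - g n))
      (Set.Icc a (b - 1))) :
    StrictMonoOn (fun n => (f n - f b) / (g n - g b))
      (Set.Icc a (b - 1)) := by
  rcases hg with hg | hg
  · exact aux_pos a b hab f g hg hmono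
  · have key := aux_pos a b hab (fun k => -f k) (fun k => -g k)
      (by intro k hk; have := hg k hk; linarith)
      (by
        convert hmono using 2 with n
        rw [show -f (n + 1) - -f n = -(f (n + 1) - f n) by ring,
          show -g (n + 1) - -g n = -(g (n + 1) - g n) by ring, neg_div_neg_eq])
    convert key using 2 with n
    rw [show f n - f b = -(-f n - -f b) by ring,
      show g n - g b = -(-g n - -g b) by ring, neg_div_neg_eq]
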